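/- The language a*b over the alphabet A = {a, b} is not recognizable with respect to the algebra (A*, ·, sh) whose operations are concatenation and the shift sh (sh(1) = 1, sh(ua) = au): there is no equivalence relation on A* of finite index that is compatible with both concatenation and sh and saturates a*b. -/

import Mathlib

/-- The shift operation: `sh 1 = 1` and `sh (u·a) = a·u`. -/
def sh {A : Type} (l : List A) : List A :=
  match l.reverse with
  | [] => []
  | a :: t => a :: t.reverse

/-- The language `a*b` over a two-letter alphabet (`a = 0`, `b = 1`). -/
def aStarB : Set (List (Fin 2)) :=
  {w : List (Fin 2) | ∃ n : ℕ, w = List.replicate n 0 ++ [1]}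

lemma sh_concat {A : Type} (w : List A) (x : A) : sh (w ++ [x]) = x :: w := by
  simp [sh]

/-- auxiliary word family -/
def fw (m k : ℕ) : List (Fin 2) := List.replicate m 0 ++ 1 :: List.replicate k 0

lemma fw_succ (m k : ℕ) : fw m (k + 1) = fw m k ++ [0] := by
  simp [fw, List.replicate_succ' (n := k)]

lemma sh_fw (m k : ℕ) : sh (fw m (k + 1)) = fw (m + 1) k := by
  rw [fw_succ, sh_concat]
  simp [fw, List.replicate_succ]

lemma fw_mem (m : ℕ) : fw m 0 ∈ aStarB := ⟨m, by simp [fw]⟩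

lemma fw_not_mem (m k : ℕ) : fw m (k + 1) ∉ aStarB := by
  rintro ⟨n, hn⟩
  have h1 : (fw m (k + 1)).getLast? = some 0 := by
    rw [fw_succ]; exact List.getLast?_concat
  have h2 : (List.replicate n (0 : Fin 2) ++ [1]).getLast? = some 1 :=
    List.getLast?_concat
  rw [hn, h2] at h1
  exact absurd (Option.some.inj h1) (by decide)

/-- `a*b` is not recognizable in the algebra `(A*, ·, sh)`: no finite-index
equivalence relation compatible with concatenation and shift saturates it. -/
theorem stmt15 :
    ¬ ∃ r : List (Fin 2) → List (Fin 2) → Prop,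
      Equivalence r ∧ Finite (Quot r) ∧
      (∀ u u' v v' : List (Fin 2), r u u' → r v v' → r (u ++ v) (u' ++ v')) ∧
      (∀ u v : List (Fin 2), r u v → r (sh u) (sh v)) ∧
      (∀ u v : List (Fin 2), r u v → (u ∈ aStarB ↔ v ∈ aStarB)) := by
  rintro ⟨r, heq, hfin, _hcat, hsh, hsat⟩
  -- pigeonhole on words fw 0 n
  obtain ⟨m, n, hmn, hq⟩ :=
    Finite.exists_ne_map_eq_of_infinite (fun n : ℕ => Quot.mk r (fw 0 n))
  have hr : r (fw 0 m) (fw 0 n) := heq.eqvGen_iff.mp ((Quot.eq ..).mp hq)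
  -- WLOG m < n
  wlog hlt : m < n generalizing m n
  · exact this n m hmn.symm hq.symm (heq.symm hr) (by omega)
  obtain ⟨c, rfl⟩ : ∃ c, n = m + (c + 1) := ⟨n - m - 1, by omega⟩
  -- iterate sh m times
  have key : ∀ j i c, r (fw i j) (fw i (j + (c + 1))) →
      r (fw (i + j) 0) (fw (i + j) (c + 1)) := by
    intro j
    induction j with
    | zero => intro i c h; simpa using h
    | succ j ih =>
      intro i c h
      have h' := hsh _ _ h
      rw [sh_fw] at h'
      have h'' : sh (fw i (j + 1 + (c + 1))) = fw (i + 1) (j + (c + 1)) := by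
        have : j + 1 + (c + 1) = (j + (c + 1)) + 1 := by omega
        rw [this, sh_fw]
      rw [h''] at h'
      have := ih (i + 1) c h'
      have harith : i + 1 + j = i + (j + 1) := by omega
      rwa [harith] at this
  have hfinal := key m 0 c hr
  simp only [Nat.zero_add] at hfinal
  exact fw_not_mem m c ((hsat _ _ hfinal).mp (fw_mem m))
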